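/- Let A be a symmetric real n×n matrix. Then for all sufficiently large λ and λ' (depending on A, with λ' much larger than λ), the matrix B = A + λE + λ'I (E the all-ones matrix, I the identity) is a matrix of Gromov products at a fixed base point r of some metric space: specifically, defining d(x,y) = B_{xx} + B_{yy} − 2B_{xy} for x ≠ y and d(x,x) = 0 gives a metric d on {1,…,n} (possibly extended by the base point r), with (x|y)_r = B_{xy}. -/
import Mathlib


/-- The matrix `B = A + λ E + λ' I` (with `E` the all-ones matrix, `I` the identity). -/
noncomputable def shiftMat {n : ℕ} (A : Fin n → Fin n → ℝ) (lam lam' : ℝ) :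
    Fin n → Fin n → ℝ :=
  fun x y => A x y + lam + (if x = y then lam' else 0)

/-- The distance function on the `n` points together with an extra base point `r`
(modelled as `none : Option (Fin n)`), defined so that the Gromov products at `r`
are the entries of `B = A + λ E + λ' I`:
`d(x,y) = B_{xx} + B_{yy} - 2 B_{xy}` for `x ≠ y`, `d(x,r) = B_{xx}`. -/
noncomputable def distExt {n : ℕ} (A : Fin n → Fin n → ℝ) (lam lam' : ℝ) :
    Option (Fin n) → Option (Fin n) → ℝ
  | none, none => 0
  | some x, none => shiftMat A lam lam' x x
  | none, some y => shiftMat A lam lam' y y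
  | some x, some y =>
      if x = y then 0 else
        shiftMat A lam lam' x x + shiftMat A lam lam' y y - 2 * shiftMat A lam lam' x y

/-- For any symmetric real matrix `A` and all sufficiently large `λ` and `λ'`
(`λ'` much larger than `λ`), `B = A + λ E + λ' I` is a matrix of Gromov products at a
fixed base point `r`: the induced distance `distExt` is a metric on the `n` points
extended by the base point, and the Gromov product of `x, y` at `r` equals `B_{xy}`. -/
theorem shiftMat_is_gromov_matrix {n : ℕ} (A : Fin n → Fin n → ℝ)
    (hsymm : ∀ x y, A x y = A y x) :
    ∃ lam₀ : ℝ, ∀ lam : ℝ, lam₀ ≤ lam → ∃ lam₁ : ℝ, ∀ lam' : ℝ, lam₁ ≤ lam' →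
      ((∀ u : Option (Fin n), distExt A lam lam' u u = 0) ∧
       (∀ u v : Option (Fin n), distExt A lam lam' u v = distExt A lam lam' v u) ∧
       (∀ u v : Option (Fin n), u ≠ v → 0 < distExt A lam lam' u v) ∧
       (∀ u v t : Option (Fin n),
          distExt A lam lam' u t ≤ distExt A lam lam' u v + distExt A lam lam' v t)) ∧
      (∀ x y : Fin n,
        (distExt A lam lam' (some x) none + distExt A lam lam' (some y) none
          - distExt A lam lam' (some x) (some y)) / 2 = shiftMat A lam lam' x y) := by

  obtain ⟨M, hM⟩ := Finite.exists_le (fun p : Fin n × Fin n => |A p.1 p.2|)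
  set M' : ℝ := max M 0 with hM'def
  have hM0 : (0:ℝ) ≤ M' := le_max_right _ _
  have hA : ∀ x y, -M' ≤ A x y ∧ A x y ≤ M' := fun x y =>
    abs_le.mp ((hM (x, y)).trans (le_max_left _ _))
  refine ⟨M', fun lam hlam => ⟨6 * M' + 1, fun lam' hlam' => ?_⟩⟩
  have hlam0 : 0 ≤ lam := hM0.trans hlam
  have hlam'0 : 0 < lam' := by linarith [(by positivity : (0:ℝ) ≤ 6 * M')]
  refine ⟨⟨?_, ?_, ?_, ?_⟩, ?_⟩
  · rintro (_ | x) <;> simp [distExt]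
  · rintro (_ | x) (_ | y) <;> simp [distExt, shiftMat]
    by_cases h : x = y
    · simp [h]
    · have h' : ¬ y = x := fun hh => h hh.symm
      simp [h, h', hsymm x y]
      ring
  · rintro (_ | x) (_ | y) huv
    · exact absurd rfl huv
    · simp only [distExt, shiftMat, eq_self_iff_true, if_true]
      have := (hA y y).1; linarith
    · simp only [distExt, shiftMat, eq_self_iff_true, if_true]
      have := (hA x x).1; linarith
    · have hxy : x ≠ y := fun h => huv (by rw [h])
      simp only [distExt, shiftMat, if_neg hxy, eq_self_iff_true, if_true]
      have h1 := (hA x x).1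
      have h2 := (hA y y).1
      have h3 := (hA x y).2
      linarith
  · rintro (_ | x) (_ | y) (_ | z)
    · simp [distExt]
    · -- r, r, z
      simp [distExt]
    · -- r, y, r : 0 ≤ 2 B_yy
      simp only [distExt, shiftMat, eq_self_iff_true, if_true]
      have := (hA y y).1; linarith
    · -- r, y, z
      by_cases h : y = z
      · subst h; simp [distExt, shiftMat]
      · simp only [distExt, shiftMat, if_neg h, eq_self_iff_true, if_true]
        have h1 := (hA y y).1
        have h3 := (hA y z).2
        linarith
    · -- x, r, r
      simp [distExt]
    · -- x, r, z : d(x,z) ≤ d(x,r) + d(r,z)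
      by_cases h : x = z
      · subst h
        simp only [distExt, shiftMat, eq_self_iff_true, if_true]
        have := (hA x x).1; linarith
      · simp only [distExt, shiftMat, if_neg h, eq_self_iff_true, if_true]
        have h4 := (hA x z).1
        linarith
    · -- x, y, r : d(x,r) ≤ d(x,y) + d(y,r)
      by_cases h : x = y
      · subst h; simp [distExt]
      · simp only [distExt, shiftMat, if_neg h, eq_self_iff_true, if_true]
        have h1 := (hA x x).2
        have h3 := (hA y y).1
        have h4 := (hA x y).2
        linarith
    · -- x, y, z all points
      by_cases hxz : x = z
      · subst hxz
        simp only [distExt, shiftMat, eq_self_iff_true, if_true, if_pos rfl]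
        by_cases hxy : x = y
        · subst hxy; simp
        · have hyx : ¬ y = x := fun hh => hxy hh.symm
          simp only [if_neg hxy, if_neg hyx]
          have h1 := (hA x x).1
          have h2 := (hA y y).1
          have h3 := (hA x y).2
          have h4 := hsymm y x
          linarith
      · simp only [distExt, shiftMat, if_neg hxz]
        by_cases hxy : x = y
        · subst hxy
          simp [distExt, shiftMat, if_neg hxz]
        · by_cases hyz : y = z
          · subst hyz; simp [distExt, shiftMat, if_neg hxy]
          · simp only [if_neg hxy, if_neg hyz, eq_self_iff_true, if_true]
            have h3 := (hA y y).1
            have h6 := (hA x y).2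
            have h7 := (hA y z).2
            have h8 := (hA x z).1
            linarith
  · intro x y
    by_cases h : x = y
    · subst h; simp [distExt]
    · simp only [distExt, shiftMat, if_neg h, eq_self_iff_true, if_true]
      ring
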